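/- arXiv:2412.07098 — 3 statements merged into one kernel-verified Lean document; each statement's English description precedes it below -/
import Mathlib

section
/- Let M > 1 and 1 < a < 2. Every spin-flip collection S ⊂ ℤ+1/2 admits exactly one (M,a)-partition. -/
noncomputable section
open scoped Classical

/-! An integer `k : ℤ` encodes the dual-lattice site (spin flip) `k + 1/2 ∈ ℤ + 1/2`;
a spin-flip collection is a finite set `γ : Finset ℤ` of even cardinality.  Distances
and diameters of sets of spin flips are computed in `ℝ` (the half-integer offsets
cancel, so they equal the corresponding integer quantities). -/

/-- The diameter of `γ` (as a subset of `ℤ + 1/2`). -/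
def diamZ (γ : Finset ℤ) : ℤ := γ.max.unbotD 0 - γ.min.untopD 0

/-- `γ` is an `(M,a)`-irreducible contour: a nonempty spin-flip collection admitting no
decomposition into at least two nonempty even parts that are pairwise at distance
greater than `M·(min of the diameters)^a`;  `dist(γᵢ,γⱼ) > c` is expressed by
`∀ x ∈ γᵢ, ∀ y ∈ γⱼ, c < |x − y|`. -/
def IsContour (M a : ℝ) (γ : Finset ℤ) : Prop :=
  γ.Nonempty ∧ Even γ.card ∧
    ¬∃ P : Finset (Finset ℤ), 2 ≤ P.card ∧ (∀ g ∈ P, g.Nonempty ∧ Even g.card) ∧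
      (P : Set (Finset ℤ)).PairwiseDisjoint id ∧ P.sup id = γ ∧
      ∀ g ∈ P, ∀ g' ∈ P, g ≠ g' → ∀ x ∈ g, ∀ y ∈ g',
        M * ((min (diamZ g) (diamZ g') : ℤ) : ℝ) ^ a < |(x : ℝ) - (y : ℝ)|

/-- `Γ` is an `(M,a)`-partition of `S`: a finite family of pairwise disjoint
`(M,a)`-irreducible contours with union `S`, any two distinct members being at distance
greater than `M·(min of the diameters)^a`. -/
def IsPartition (M a : ℝ) (S : Finset ℤ) (Γ : Finset (Finset ℤ)) : Prop :=
  (∀ g ∈ Γ, IsContour M a g) ∧ (Γ : Set (Finset ℤ)).PairwiseDisjoint id ∧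
    Γ.sup id = S ∧
    ∀ g ∈ Γ, ∀ g' ∈ Γ, g ≠ g' → ∀ x ∈ g, ∀ y ∈ g',
      M * ((min (diamZ g) (diamZ g') : ℤ) : ℝ) ^ a < |(x : ℝ) - (y : ℝ)|

lemma diamZ_eq {γ : Finset ℤ} (h : γ.Nonempty) : diamZ γ = γ.max' h - γ.min' h := by
  unfold diamZ
  rw [← Finset.coe_max' h, ← Finset.coe_min' h]
  rfl

lemma diamZ_nonneg {γ : Finset ℤ} (h : γ.Nonempty) : 0 ≤ diamZ γ := by
  obtain ⟨x, hx⟩ := h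
  rw [diamZ_eq ⟨x, hx⟩]
  have h1 := Finset.min'_le γ x hx
  have h2 := Finset.le_max' γ x hx
  omega

lemma abs_sub_le_diamZ {γ : Finset ℤ} {x y : ℤ} (hx : x ∈ γ) (hy : y ∈ γ) :
    |x - y| ≤ diamZ γ := by
  have hne : γ.Nonempty := ⟨x, hx⟩
  rw [diamZ_eq hne]
  have h1 := Finset.min'_le γ x hx
  have h2 := Finset.le_max' γ x hx
  have h3 := Finset.min'_le γ y hy
  have h4 := Finset.le_max' γ y hy
  rw [abs_le]
  omega

lemma two_le_card_of_even {γ : Finset ℤ} (h : γ.Nonempty) (he : Even γ.card) :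
    2 ≤ γ.card := by
  obtain ⟨k, hk⟩ := he
  have := Finset.card_pos.mpr h
  omega

lemma one_le_diamZ {γ : Finset ℤ} (h : γ.Nonempty) (he : Even γ.card) :
    1 ≤ diamZ γ := by
  have h2 : 1 < γ.card := two_le_card_of_even h he
  have := Finset.min'_lt_max'_of_card γ h2
  rw [diamZ_eq h]
  omega

lemma diamZ_mono {γ γ' : Finset ℤ} (h : γ.Nonempty) (hsub : γ ⊆ γ') :
    diamZ γ ≤ diamZ γ' := by
  have h' : γ'.Nonempty := h.mono hsub
  rw [diamZ_eq h, diamZ_eq h']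
  have h1 := Finset.min'_subset h hsub
  have h2 := Finset.max'_subset h hsub
  omega

lemma chainLem {M a : ℝ} (hM : 1 < M) (ha1 : 1 ≤ a) {t r : ℝ} (ht : 1 ≤ t)
    (h : M * t ^ a < r) : t < r := by
  have h1 : t ^ (1 : ℝ) ≤ t ^ a := Real.rpow_le_rpow_of_exponent_le ht ha1
  rw [Real.rpow_one] at h1
  have h0 : (0 : ℝ) ≤ t ^ a := le_trans (le_trans zero_le_one ht) h1
  nlinarith

lemma sepMono {M a : ℝ} (hM : 0 < M) (ha : 0 ≤ a) {p q g h : ℤ} (hp : 0 ≤ p) (hq : 0 ≤ q)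
    (hpg : p ≤ g) (hqh : q ≤ h) {r : ℝ} (hr : M * ((min g h : ℤ) : ℝ) ^ a < r) :
    M * ((min p q : ℤ) : ℝ) ^ a < r := by
  have h0 : (0 : ℝ) ≤ ((min p q : ℤ) : ℝ) := by exact_mod_cast le_min hp hq
  have hle : ((min p q : ℤ) : ℝ) ≤ ((min g h : ℤ) : ℝ) := by
    exact_mod_cast min_le_min hpg hqh
  have h2 := Real.rpow_le_rpow h0 hle ha
  have h3 := mul_le_mul_of_nonneg_left h2 hM.le
  linarith

lemma key {M a : ℝ} (hM : 1 < M) (ha1 : 1 < a) :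
    ∀ n : ℕ, ∀ (S : Finset ℤ) (Γ Γ' : Finset (Finset ℤ)),
      IsPartition M a S Γ → IsPartition M a S Γ' →
      ∀ γ ∈ Γ, γ ∉ Γ' → (diamZ γ).toNat ≤ n → ∃ γ' ∈ Γ', γ ⊆ γ' := by
  intro n
  induction n using Nat.strong_induction_on with
  | _ n IH =>
  intro S Γ Γ' hΓ hΓ' γ hγ hγ' hn
  have hγne : γ.Nonempty := (hΓ.1 γ hγ).1
  have hγeven : Even γ.card := (hΓ.1 γ hγ).2.1
  have hγirr := (hΓ.1 γ hγ).2.2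
  have hdγ1 : 1 ≤ diamZ γ := one_le_diamZ hγne hγeven
  set T : Finset (Finset ℤ) := Γ'.filter (fun t => (t ∩ γ).Nonempty) with hT
  have hTsub : T ⊆ Γ' := Finset.filter_subset _ _
  have hγS : γ ⊆ S := by
    rw [← hΓ.2.2.1]; exact Finset.le_sup (f := id) hγ
  have hmemT : ∀ x ∈ γ, ∃ t ∈ T, x ∈ t := by
    intro x hx
    have hxS : x ∈ S := hγS hx
    rw [← hΓ'.2.2.1] at hxS
    obtain ⟨t, ht, hxt⟩ := Finset.mem_sup.mp hxS
    exact ⟨t, Finset.mem_filter.mpr ⟨ht, ⟨x, Finset.mem_inter.mpr ⟨hxt, hx⟩⟩⟩, hxt⟩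
  have hTnΓ : ∀ t ∈ T, t ∉ Γ := by
    intro t ht htΓ
    have hint : (t ∩ γ).Nonempty := (Finset.mem_filter.mp ht).2
    by_cases htγ : t = γ
    · exact hγ' (htγ ▸ hTsub ht)
    · have hd := hΓ.2.1 (Finset.mem_coe.mpr htΓ) (Finset.mem_coe.mpr hγ) htγ
      exact hint.ne_empty (Finset.disjoint_iff_inter_eq_empty.mp hd)
  have hTcont : ∀ t ∈ T, t.Nonempty ∧ Even t.card := by
    intro t ht
    exact ⟨(hΓ'.1 t (hTsub ht)).1, (hΓ'.1 t (hTsub ht)).2.1⟩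
  have hsmall : ∀ t ∈ T, diamZ t < diamZ γ → t ⊆ γ := by
    intro t ht hlt
    have hm : (diamZ t).toNat < n :=
      lt_of_lt_of_le ((Int.toNat_lt_toNat (by omega)).mpr hlt) hn
    obtain ⟨δ, hδ, hsubδ⟩ := IH _ hm S Γ' Γ hΓ' hΓ t (hTsub ht) (hTnΓ t ht) le_rfl
    have hint : (t ∩ γ).Nonempty := (Finset.mem_filter.mp ht).2
    have hδγ : δ = γ := by
      by_contra hne
      have hd := hΓ.2.1 (Finset.mem_coe.mpr hδ) (Finset.mem_coe.mpr hγ) hne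
      obtain ⟨x, hx⟩ := hint
      have hx1 := Finset.mem_inter.mp hx
      exact (Finset.disjoint_left.mp hd (hsubδ hx1.1)) hx1.2
    exact hδγ ▸ hsubδ
  have hbig2 : ∀ t ∈ T, ∀ u ∈ T, diamZ γ ≤ diamZ t → diamZ γ ≤ diamZ u → t = u := by
    intro t ht u hu hbt hbu
    by_contra hne
    obtain ⟨x, hx⟩ := (Finset.mem_filter.mp ht).2
    obtain ⟨y, hy⟩ := (Finset.mem_filter.mp hu).2
    have hx1 := Finset.mem_inter.mp hx
    have hy1 := Finset.mem_inter.mp hy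
    have hsep := hΓ'.2.2.2 t (hTsub ht) u (hTsub hu) hne x hx1.1 y hy1.1
    have habs : |(x : ℝ) - (y : ℝ)| ≤ ((diamZ γ : ℤ) : ℝ) := by
      have := abs_sub_le_diamZ hx1.2 hy1.2
      rw [← Int.cast_sub, ← Int.cast_abs]
      exact_mod_cast this
    have hmin : (1 : ℝ) ≤ ((min (diamZ t) (diamZ u) : ℤ) : ℝ) := by
      have : 1 ≤ min (diamZ t) (diamZ u) := le_min (le_trans hdγ1 hbt) (le_trans hdγ1 hbu)
      exact_mod_cast this
    have hlt := chainLem hM ha1.le hmin hsep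
    have : ((diamZ γ : ℤ) : ℝ) ≤ ((min (diamZ t) (diamZ u) : ℤ) : ℝ) := by
      exact_mod_cast le_min hbt hbu
    linarith
  have hTne : T.Nonempty := by
    obtain ⟨x, hx⟩ := hγne
    obtain ⟨t, ht, _⟩ := hmemT x hx
    exact ⟨t, ht⟩
  by_cases hTcard : 2 ≤ T.card
  · exfalso
    apply hγirr
    have hinj : Set.InjOn (fun t => t ∩ γ) ↑T := by
      intro t ht u hu heq
      by_contra hne
      have hd := hΓ'.2.1 (Finset.mem_coe.mpr (hTsub (Finset.mem_coe.mp ht)))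
        (Finset.mem_coe.mpr (hTsub (Finset.mem_coe.mp hu))) hne
      obtain ⟨x, hx⟩ := (Finset.mem_filter.mp (Finset.mem_coe.mp ht)).2
      have hx1 := Finset.mem_inter.mp hx
      have heq' : t ∩ γ = u ∩ γ := heq
      have hxu : x ∈ u ∩ γ := heq' ▸ hx
      exact (Finset.disjoint_left.mp hd hx1.1) (Finset.mem_inter.mp hxu).1
    set P : Finset (Finset ℤ) := T.image (fun t => t ∩ γ) with hP
    -- card sum
    have hdisj : ∀ t ∈ T, ∀ u ∈ T, t ≠ u → Disjoint (t ∩ γ) (u ∩ γ) := by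
      intro t ht u hu hne
      have hd := hΓ'.2.1 (Finset.mem_coe.mpr (hTsub ht)) (Finset.mem_coe.mpr (hTsub hu)) hne
      exact Finset.disjoint_of_subset_left Finset.inter_subset_left
        (Finset.disjoint_of_subset_right Finset.inter_subset_left hd)
    have hbiU : γ = T.biUnion (fun t => t ∩ γ) := by
      ext x
      simp only [Finset.mem_biUnion, Finset.mem_inter]
      constructor
      · intro hx
        obtain ⟨t, ht, hxt⟩ := hmemT x hx
        exact ⟨t, ht, hxt, hx⟩
      · rintro ⟨t, _, _, hx⟩; exact hx
    have hcardsum : γ.card = ∑ t ∈ T, (t ∩ γ).card := by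
      have h := Finset.card_biUnion hdisj
      rw [← hbiU] at h
      exact h
    have hevenP : ∀ t ∈ T, Even ((t ∩ γ).card) := by
      intro t ht
      by_cases hlt : diamZ t < diamZ γ
      · have := hsmall t ht hlt
        rw [Finset.inter_eq_left.mpr this]
        exact (hTcont t ht).2
      · push_neg at hlt
        have hrest : Even (∑ u ∈ T.erase t, (u ∩ γ).card) := by
          apply Finset.even_sum
          intro u hu
          have huT := Finset.mem_of_mem_erase hu
          have hune : u ≠ t := Finset.ne_of_mem_erase hu
          have hult : diamZ u < diamZ γ := by
            by_contra hge
            push_neg at hge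
            exact hune (hbig2 u huT t ht hge hlt)
          rw [Finset.inter_eq_left.mpr (hsmall u huT hult)]
          exact (hTcont u huT).2
        have hsum := Finset.add_sum_erase T (fun u => (u ∩ γ).card) ht
        rw [← hsum] at hcardsum
        rw [hcardsum] at hγeven
        exact (Nat.even_add.mp hγeven).mpr hrest
    refine ⟨P, ?_, ?_, ?_, ?_, ?_⟩
    · rwa [hP, Finset.card_image_of_injOn hinj]
    · intro g hg
      obtain ⟨t, ht, rfl⟩ := Finset.mem_image.mp hg
      exact ⟨(Finset.mem_filter.mp ht).2, hevenP t ht⟩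
    · intro g hg g' hg' hne
      obtain ⟨t, ht, rfl⟩ := Finset.mem_image.mp (Finset.mem_coe.mp hg)
      obtain ⟨u, hu, rfl⟩ := Finset.mem_image.mp (Finset.mem_coe.mp hg')
      have htu : t ≠ u := fun h => hne (by rw [h])
      exact hdisj t ht u hu htu
    · apply Finset.Subset.antisymm
      · intro x hx
        obtain ⟨g, hg, hxg⟩ := Finset.mem_sup.mp hx
        obtain ⟨t, ht, rfl⟩ := Finset.mem_image.mp hg
        exact (Finset.mem_inter.mp hxg).2
      · intro x hx
        obtain ⟨t, ht, hxt⟩ := hmemT x hx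
        exact Finset.mem_sup.mpr ⟨t ∩ γ, Finset.mem_image_of_mem _ ht,
          Finset.mem_inter.mpr ⟨hxt, hx⟩⟩
    · intro g hg g' hg' hne x hx y hy
      obtain ⟨t, ht, rfl⟩ := Finset.mem_image.mp hg
      obtain ⟨u, hu, rfl⟩ := Finset.mem_image.mp hg'
      have htu : t ≠ u := fun h => hne (by rw [h])
      have hx1 := Finset.mem_inter.mp hx
      have hy1 := Finset.mem_inter.mp hy
      have hsep := hΓ'.2.2.2 t (hTsub ht) u (hTsub hu) htu x hx1.1 y hy1.1
      exact sepMono (by linarith) (by linarith) (diamZ_nonneg ⟨x, hx⟩) (diamZ_nonneg ⟨y, hy⟩)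
        (diamZ_mono ⟨x, hx⟩ Finset.inter_subset_left)
        (diamZ_mono ⟨y, hy⟩ Finset.inter_subset_left) hsep
  · -- T.card = 1
    have h1 : T.card = 1 := by
      have := Finset.card_pos.mpr hTne
      omega
    obtain ⟨t, ht⟩ := Finset.card_eq_one.mp h1
    refine ⟨t, hTsub (by rw [ht]; exact Finset.mem_singleton_self t), ?_⟩
    intro x hx
    obtain ⟨u, hu, hxu⟩ := hmemT x hx
    rw [ht, Finset.mem_singleton] at hu
    exact hu ▸ hxu

lemma partition_subset {M a : ℝ} (hM : 1 < M) (ha1 : 1 < a) {S : Finset ℤ}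
    {Γ Γ' : Finset (Finset ℤ)} (h : IsPartition M a S Γ) (h' : IsPartition M a S Γ') :
    Γ ⊆ Γ' := by
  intro γ hγ
  by_contra hγ'
  obtain ⟨γ', hγ'mem, hsub⟩ := key hM ha1 (diamZ γ).toNat S Γ Γ' h h' γ hγ hγ' le_rfl
  have hγne : γ.Nonempty := (h.1 γ hγ).1
  have hne1 : γ' ≠ γ := fun he => hγ' (he ▸ hγ'mem)
  have hγ'nΓ : γ' ∉ Γ := by
    intro hmem
    have hd := h.2.1 (Finset.mem_coe.mpr hmem) (Finset.mem_coe.mpr hγ) hne1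
    obtain ⟨x, hx⟩ := hγne
    exact (Finset.disjoint_right.mp hd hx) (hsub hx)
  obtain ⟨δ, hδ, hsub'⟩ := key hM ha1 (diamZ γ').toNat S Γ' Γ h' h γ' hγ'mem hγ'nΓ le_rfl
  have hδγ : δ = γ := by
    by_contra hne
    have hd := h.2.1 (Finset.mem_coe.mpr hδ) (Finset.mem_coe.mpr hγ) hne
    obtain ⟨x, hx⟩ := hγne
    exact (Finset.disjoint_right.mp hd hx) (hsub' (hsub hx))
  have : γ = γ' := Finset.Subset.antisymm hsub (hδγ ▸ hsub')
  exact hγ' (this ▸ hγ'mem)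

lemma partition_exists {M a : ℝ} (hM : 1 < M) (ha1 : 1 < a) :
    ∀ S : Finset ℤ, Even S.card → ∃ Γ : Finset (Finset ℤ), IsPartition M a S Γ := by
  intro S
  induction S using Finset.strongInduction with
  | _ S IH =>
  intro hS
  rcases S.eq_empty_or_nonempty with hSe | hSne
  · subst hSe
    refine ⟨∅, ?_, ?_, ?_, ?_⟩
    · intro g hg; exact absurd hg (Finset.notMem_empty g)
    · simp [Set.PairwiseDisjoint]
    · simp
    · intro g hg; exact absurd hg (Finset.notMem_empty g)
  · by_cases hc : IsContour M a S
    · refine ⟨{S}, ?_, ?_, ?_, ?_⟩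
      · intro g hg; rw [Finset.mem_singleton] at hg; exact hg ▸ hc
      · simp [Set.PairwiseDisjoint]
      · simp
      · intro g hg g' hg' hne
        rw [Finset.mem_singleton] at hg hg'
        exact absurd (hg.trans hg'.symm) hne
    · have hP : ∃ P : Finset (Finset ℤ), 2 ≤ P.card ∧ (∀ g ∈ P, g.Nonempty ∧ Even g.card) ∧
          (P : Set (Finset ℤ)).PairwiseDisjoint id ∧ P.sup id = S ∧
          ∀ g ∈ P, ∀ g' ∈ P, g ≠ g' → ∀ x ∈ g, ∀ y ∈ g',
            M * ((min (diamZ g) (diamZ g') : ℤ) : ℝ) ^ a < |(x : ℝ) - (y : ℝ)| := by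
        by_contra hnP
        exact hc ⟨hSne, hS, hnP⟩
      obtain ⟨P, hPcard, hPparts, hPpd, hPsup, hPsep⟩ := hP
      have hgsub : ∀ g ∈ P, g ⊂ S := by
        intro g hg
        have hgS : g ⊆ S := by rw [← hPsup]; exact Finset.le_sup (f := id) hg
        obtain ⟨h, hh, hne⟩ := Finset.exists_mem_ne hPcard g
        obtain ⟨x, hx⟩ := (hPparts h hh).1
        have hxS : x ∈ S := by rw [← hPsup]; exact Finset.mem_sup.mpr ⟨h, hh, hx⟩
        have hd := hPpd (Finset.mem_coe.mpr hh) (Finset.mem_coe.mpr hg) hne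
        exact (Finset.ssubset_iff_of_subset hgS).mpr
          ⟨x, hxS, fun hxg => (Finset.disjoint_left.mp hd hx) hxg⟩
      choose Γg hΓg using fun (g : Finset ℤ) (hg : g ∈ P) =>
        IH g (hgsub g hg) (hPparts g hg).2
      set Γ : Finset (Finset ℤ) := P.attach.biUnion (fun g => Γg g.1 g.2) with hΓdef
      have hmemΓ : ∀ c ∈ Γ, ∃ g, ∃ hg : g ∈ P, c ∈ Γg g hg := by
        intro c hc'
        obtain ⟨g, hg, hcg⟩ := Finset.mem_biUnion.mp hc'
        exact ⟨g.1, g.2, hcg⟩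
      have hcsub : ∀ (g : Finset ℤ) (hg : g ∈ P), ∀ c ∈ Γg g hg, c ⊆ g := by
        intro g hg c hc'
        have := (hΓg g hg).2.2.1
        rw [← this]
        exact Finset.le_sup (f := id) hc'
      have hcne : ∀ (g : Finset ℤ) (hg : g ∈ P), ∀ c ∈ Γg g hg, c.Nonempty := by
        intro g hg c hc'
        exact ((hΓg g hg).1 c hc').1
      refine ⟨Γ, ?_, ?_, ?_, ?_⟩
      · intro c hc'
        obtain ⟨g, hg, hcg⟩ := hmemΓ c hc'
        exact (hΓg g hg).1 c hcg
      · intro c hc' c' hc'' hne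
        obtain ⟨g, hg, hcg⟩ := hmemΓ c (Finset.mem_coe.mp hc')
        obtain ⟨g', hg', hcg'⟩ := hmemΓ c' (Finset.mem_coe.mp hc'')
        by_cases hgg : g = g'
        · subst hgg
          exact (hΓg g hg).2.1 (Finset.mem_coe.mpr hcg) (Finset.mem_coe.mpr hcg') hne
        · have hd := hPpd (Finset.mem_coe.mpr hg) (Finset.mem_coe.mpr hg') hgg
          exact Finset.disjoint_of_subset_left (hcsub g hg c hcg)
            (Finset.disjoint_of_subset_right (hcsub g' hg' c' hcg') hd)
      · rw [hΓdef, Finset.sup_biUnion]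
        rw [← hPsup]
        apply le_antisymm
        · apply Finset.sup_le
          intro g hg
          rw [(hΓg g.1 g.2).2.2.1]
          exact Finset.le_sup (f := id) g.2
        · apply Finset.sup_le
          intro g hg
          have : (id g : Finset ℤ) = (Γg g hg).sup id := ((hΓg g hg).2.2.1).symm
          rw [this]
          exact Finset.le_sup (f := fun x => (Γg x.1 x.2).sup id)
            (Finset.mem_attach P ⟨g, hg⟩)
      · intro c hc' c' hc'' hne x hx y hy
        obtain ⟨g, hg, hcg⟩ := hmemΓ c hc'
        obtain ⟨g', hg', hcg'⟩ := hmemΓ c' hc''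
        by_cases hgg : g = g'
        · subst hgg
          exact (hΓg g hg).2.2.2 c hcg c' hcg' hne x hx y hy
        · have hsep := hPsep g hg g' hg' hgg x (hcsub g hg c hcg hx) y (hcsub g' hg' c' hcg' hy)
          exact sepMono (by linarith) (by linarith)
            (diamZ_nonneg ⟨x, hx⟩) (diamZ_nonneg ⟨y, hy⟩)
            (diamZ_mono ⟨x, hx⟩ (hcsub g hg c hcg))
            (diamZ_mono ⟨y, hy⟩ (hcsub g' hg' c' hcg')) hsep

/-- existence and uniqueness of the `(M,a)`-partition of any spin-flip
collection. -/
theorem partition_exists_unique (M a : ℝ) (hM : 1 < M) (ha1 : 1 < a) (ha2 : a < 2)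
    (S : Finset ℤ) (hS : Even S.card) :
    ∃! Γ : Finset (Finset ℤ), IsPartition M a S Γ := by
  obtain ⟨Γ, hΓ⟩ := partition_exists hM ha1 S hS
  refine ⟨Γ, hΓ, ?_⟩
  intro Γ' hΓ'
  exact Finset.Subset.antisymm (partition_subset hM ha1 hΓ' hΓ) (partition_subset hM ha1 hΓ hΓ')
end
end

section
/- Let Γ be a well-ordered finite family of pairwise disjoint spin-flip collections and let γ ∈ Γ be external. Then: (1) N(Γ) is the disjoint union of N(Γ∖Γ(γ)) and N(Γ(γ)); (2) N(Γ∖{γ}) is the disjoint union of N(Γ∖Γ(γ)), N(Γ₊(γ)) and N(Γ₋(γ)); (3) N(Γ(γ)) is the disjoint union of N(Γ₊(γ)) and I₋(γ)∖N(Γ₋(γ)). -/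
noncomputable section
open scoped Classical

/-! An integer `k : ℤ` encodes the dual-lattice site (spin flip) `k + 1/2 ∈ ℤ + 1/2`. -/

/-- The number of spin flips of `γ` lying strictly to the right of the integer site `x`
(i.e. flips `k + 1/2 > x`, that is `x ≤ k`). -/
def cntR (γ : Finset ℤ) (x : ℤ) : ℕ := (γ.filter fun k => x ≤ k).card

/-- The number of spin flips of `γ` lying strictly to the right of the dual site
`k' + 1/2`. -/
def cntRdual (γ : Finset ℤ) (k' : ℤ) : ℕ := (γ.filter fun k => k' < k).card

/-- The minus-interior `I₋(γ)`: the integers `x` such that the number of spin flips of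
`γ` to the right of `x` is odd. -/
def Iminus (γ : Finset ℤ) : Finset ℤ :=
  (Finset.Icc (γ.min.untopD 0) (γ.max.unbotD 0)).filter fun x => Odd (cntR γ x)

/-- The volume `V(γ) = [min γ, max γ] ∩ ℤ`. -/
def vol (γ : Finset ℤ) : Finset ℤ := Finset.Icc (γ.min.untopD 0 + 1) (γ.max.unbotD 0)

/-- `γ < γ'`: `γ` is contained in the open interval between two consecutive spin flips
of `γ'`. -/
def ltC (γ γ' : Finset ℤ) : Prop :=
  ∃ u ∈ γ', ∃ v ∈ γ', u < v ∧ (∀ w ∈ γ', ¬(u < w ∧ w < v)) ∧ ∀ x ∈ γ, u < x ∧ x < v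

/-- `Γ` is a well-ordered finite family of pairwise disjoint spin-flip collections:
members incomparable under `<` have disjoint volumes. -/
def WellOrdered (Γ : Finset (Finset ℤ)) : Prop :=
  (∀ g ∈ Γ, g.Nonempty ∧ Even g.card) ∧ (Γ : Set (Finset ℤ)).PairwiseDisjoint id ∧
    ∀ g ∈ Γ, ∀ g' ∈ Γ, g ≠ g' → ¬ltC g g' → ¬ltC g' g → Disjoint (vol g) (vol g')

/-- `N(Γ)`: the integers `x` such that the number of spin flips of `⋃Γ` to the right of
`x` is odd. -/
def NSet (Γ : Finset (Finset ℤ)) : Finset ℤ := Iminus (Γ.sup id)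

/-- `Γ(γ) = {γ' ∈ Γ : γ' = γ or γ' < γ}`. -/
def ΓOf (Γ : Finset (Finset ℤ)) (γ : Finset ℤ) : Finset (Finset ℤ) :=
  Γ.filter fun g => g = γ ∨ ltC g γ

/-- `Γ₋(γ) = {γ' ∈ Γ : γ' ⊂ I₋(γ)}`: members all of whose spin flips lie in the minus
region of `γ`. -/
def Γm (Γ : Finset (Finset ℤ)) (γ : Finset ℤ) : Finset (Finset ℤ) :=
  Γ.filter fun g => ∀ k ∈ g, Odd (cntRdual γ k)

/-- `Γ₊(γ) = {γ' ∈ Γ : γ' ⊂ I₊(γ)}`: members all of whose spin flips lie in the plus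
region of `γ` strictly inside its volume. -/
def Γp (Γ : Finset (Finset ℤ)) (γ : Finset ℤ) : Finset (Finset ℤ) :=
  Γ.filter fun g => ∀ k ∈ g,
    Even (cntRdual γ k) ∧ 0 < cntRdual γ k ∧ cntRdual γ k < γ.card

/-! ### Auxiliary lemmas -/

lemma cntR_eq_cntRdual (γ : Finset ℤ) (x : ℤ) : cntR γ x = cntRdual γ (x - 1) := by
  unfold cntR cntRdual
  congr 1
  apply Finset.filter_congr
  intro k _
  constructor <;> intro <;> omega

lemma cntR_pos_bound {γ : Finset ℤ} (hne : γ.Nonempty) {x : ℤ} (h : 0 < cntR γ x) :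
    x ≤ γ.max' hne := by
  obtain ⟨k, hk⟩ := Finset.card_pos.mp h
  rw [Finset.mem_filter] at hk
  exact hk.2.trans (Finset.le_max' _ _ hk.1)

lemma cntR_lt_card_bound {γ : Finset ℤ} (hne : γ.Nonempty) {x : ℤ} (h : cntR γ x < γ.card) :
    γ.min' hne < x := by
  have hss : γ.filter (fun k => x ≤ k) ⊂ γ := by
    refine Finset.ssubset_iff_of_subset (Finset.filter_subset _ _) |>.mpr ?_
    by_contra hcon
    push_neg at hcon
    have : γ ⊆ γ.filter (fun k => x ≤ k) := fun k hk => by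
      rcases (Finset.mem_filter.mp (hcon k hk)).2 with h2
      exact Finset.mem_filter.mpr ⟨hk, h2⟩
    exact absurd (Finset.card_le_card this) (by simp [cntR] at h; omega)
  obtain ⟨k, hk, hknot⟩ := Finset.exists_of_ssubset hss
  have : ¬ x ≤ k := fun hle => hknot (Finset.mem_filter.mpr ⟨hk, hle⟩)
  have := Finset.min'_le _ _ hk
  omega

lemma odd_cntR_bounds {γ : Finset ℤ} (hne : γ.Nonempty) (hev : Even γ.card) {x : ℤ}
    (h : Odd (cntR γ x)) : γ.min' hne < x ∧ x ≤ γ.max' hne := by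
  have h1 : 0 < cntR γ x := by rcases h with ⟨n, hn⟩; omega
  have h2 : cntR γ x < γ.card := by
    have hle : cntR γ x ≤ γ.card := Finset.card_filter_le _ _
    rcases eq_or_lt_of_le hle with heq | hlt
    · rw [heq] at h; exact absurd hev (Nat.not_even_iff_odd.mpr h)
    · exact hlt
  exact ⟨cntR_lt_card_bound hne h2, cntR_pos_bound hne h1⟩

lemma mem_Iminus_iff {γ : Finset ℤ} (hev : Even γ.card) {x : ℤ} :
    x ∈ Iminus γ ↔ Odd (cntR γ x) := by
  constructor
  · intro h; exact (Finset.mem_filter.mp h).2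
  · intro h
    have hne : γ.Nonempty := by
      rcases Finset.eq_empty_or_nonempty γ with rfl | hne
      · simp [cntR] at h
      · exact hne
    obtain ⟨h1, h2⟩ := odd_cntR_bounds hne hev h
    refine Finset.mem_filter.mpr ⟨?_, h⟩
    rw [← Finset.coe_min' hne, ← Finset.coe_max' hne, WithTop.untopD_coe, WithBot.unbotD_coe]
    rw [Finset.mem_Icc]
    omega

lemma mem_vol_iff {γ : Finset ℤ} (hne : γ.Nonempty) {x : ℤ} :
    x ∈ vol γ ↔ γ.min' hne < x ∧ x ≤ γ.max' hne := by
  unfold vol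
  rw [← Finset.coe_min' hne, ← Finset.coe_max' hne, WithTop.untopD_coe, WithBot.unbotD_coe,
    Finset.mem_Icc]
  omega

lemma cntR_sup (S : Finset (Finset ℤ)) (hdisj : (S : Set (Finset ℤ)).PairwiseDisjoint id)
    (x : ℤ) : cntR (S.sup id) x = ∑ g ∈ S, cntR g x := by
  unfold cntR
  rw [Finset.sup_eq_biUnion, Finset.filter_biUnion]
  exact Finset.card_biUnion fun a ha b hb hab =>
    Finset.disjoint_filter_filter (hdisj ha hb hab)

lemma card_sup (S : Finset (Finset ℤ)) (hdisj : (S : Set (Finset ℤ)).PairwiseDisjoint id) :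
    (S.sup id).card = ∑ g ∈ S, g.card := by
  rw [Finset.sup_eq_biUnion]
  exact Finset.card_biUnion fun a ha b hb hab => hdisj ha hb hab

lemma mem_NSet_iff {S : Finset (Finset ℤ)} (hdisj : (S : Set (Finset ℤ)).PairwiseDisjoint id)
    (hev : ∀ g ∈ S, Even g.card) {x : ℤ} :
    x ∈ NSet S ↔ Odd (∑ g ∈ S, cntR g x) := by
  unfold NSet
  rw [mem_Iminus_iff, cntR_sup S hdisj]
  rw [card_sup S hdisj]
  exact Finset.even_sum _ hev

lemma odd_sum_exists {S : Finset (Finset ℤ)} {f : Finset ℤ → ℕ}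
    (h : Odd (∑ g ∈ S, f g)) : ∃ g ∈ S, Odd (f g) := by
  by_contra hcon
  push_neg at hcon
  simp only [← Nat.not_even_iff_odd, not_not] at hcon
  exact (Nat.not_even_iff_odd.mpr h) (Finset.even_sum _ hcon)

lemma cntRdual_pos_exists {γ : Finset ℤ} {y : ℤ} (h : 0 < cntRdual γ y) : ∃ w ∈ γ, y < w := by
  obtain ⟨w, hw⟩ := Finset.card_pos.mp h
  rw [Finset.mem_filter] at hw
  exact ⟨w, hw.1, hw.2⟩

lemma cntRdual_lt_card_exists {γ : Finset ℤ} {y : ℤ} (h : cntRdual γ y < γ.card) :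
    ∃ w ∈ γ, w ≤ y := by
  by_contra hcon
  push_neg at hcon
  have : γ.filter (fun k => y < k) = γ := Finset.filter_true_of_mem (fun w hw => hcon w hw)
  unfold cntRdual at h
  rw [this] at h
  omega

lemma ltC_spec {g γ : Finset ℤ} (h : ltC g γ) :
    ∃ u ∈ γ, ∃ v ∈ γ, u < v ∧ (∀ x ∈ g, u < x ∧ x < v) ∧
      ∃ c, 0 < c ∧ c < γ.card ∧ ∀ y : ℤ, u ≤ y → y < v → cntRdual γ y = c := by
  obtain ⟨u, hu, v, hv, huv, hno, hg⟩ := h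
  refine ⟨u, hu, v, hv, huv, hg, (γ.filter fun w => v ≤ w).card, ?_, ?_, ?_⟩
  · exact Finset.card_pos.mpr ⟨v, Finset.mem_filter.mpr ⟨hv, le_refl v⟩⟩
  · refine Finset.card_lt_card ?_
    refine Finset.ssubset_iff_of_subset (Finset.filter_subset _ _) |>.mpr ?_
    exact ⟨u, hu, fun hmem => absurd (Finset.mem_filter.mp hmem).2 (by omega)⟩
  · intro y hy1 hy2
    unfold cntRdual
    congr 1
    apply Finset.filter_congr
    intro w hw
    constructor
    · intro hyw
      by_contra hcon
      push_neg at hcon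
      exact hno w hw ⟨by omega, by omega⟩
    · intro hvw; omega

/-- Lemma `posneg`: decompositions of the minus region of a well-ordered
family after removing an external member `γ`. -/
theorem minus_region_decomposition (Γ : Finset (Finset ℤ)) (hwo : WellOrdered Γ)
    (γ : Finset ℤ) (hγ : γ ∈ Γ) (hext : ∀ γ' ∈ Γ, ¬ltC γ γ') :
    (NSet Γ = NSet (Γ \ ΓOf Γ γ) ∪ NSet (ΓOf Γ γ) ∧
      Disjoint (NSet (Γ \ ΓOf Γ γ)) (NSet (ΓOf Γ γ))) ∧
    (NSet (Γ.erase γ) = NSet (Γ \ ΓOf Γ γ) ∪ NSet (Γp Γ γ) ∪ NSet (Γm Γ γ) ∧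
      Disjoint (NSet (Γ \ ΓOf Γ γ)) (NSet (Γp Γ γ)) ∧
      Disjoint (NSet (Γ \ ΓOf Γ γ)) (NSet (Γm Γ γ)) ∧
      Disjoint (NSet (Γp Γ γ)) (NSet (Γm Γ γ))) ∧
    (NSet (ΓOf Γ γ) = NSet (Γp Γ γ) ∪ (Iminus γ \ NSet (Γm Γ γ)) ∧
      Disjoint (NSet (Γp Γ γ)) (Iminus γ \ NSet (Γm Γ γ))) := by
  obtain ⟨hmem, hpd, hvol⟩ := hwo
  obtain ⟨hneγ, hevγ⟩ := hmem γ hγ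
  -- bounds for members of Γm ∪ Γp
  have key_bounds : ∀ g, (g ∈ Γm Γ γ ∨ g ∈ Γp Γ γ) →
      g ∈ Γ ∧ ∀ k ∈ g, 0 < cntRdual γ k ∧ cntRdual γ k < γ.card := by
    intro g hg
    rcases hg with hg | hg
    · rw [Γm, Finset.mem_filter] at hg
      refine ⟨hg.1, fun k hk => ?_⟩
      have ho := hg.2 k hk
      have hle : cntRdual γ k ≤ γ.card := Finset.card_filter_le _ _
      constructor
      · rcases ho with ⟨n, hn⟩; omega
      · rcases eq_or_lt_of_le hle with heq | h
        · rw [heq] at ho; exact absurd hevγ (Nat.not_even_iff_odd.mpr ho)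
        · exact h
    · rw [Γp, Finset.mem_filter] at hg
      exact ⟨hg.1, fun k hk => (hg.2 k hk).2⟩
  -- F3 : members of Γm ∪ Γp are strictly below γ
  have F3 : ∀ g, (g ∈ Γm Γ γ ∨ g ∈ Γp Γ γ) → g ∈ Γ ∧ g ≠ γ ∧ ltC g γ := by
    intro g hgm
    obtain ⟨hgΓ, hb⟩ := key_bounds g hgm
    obtain ⟨hneg, hevg⟩ := hmem g hgΓ
    have hgne : g ≠ γ := by
      rintro rfl
      have hbb := hb (g.max' hneg) (Finset.max'_mem _ _)
      have h0 : cntRdual g (g.max' hneg) = 0 := by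
        unfold cntRdual
        rw [Finset.card_eq_zero, Finset.filter_eq_empty_iff]
        intro w hw
        have := Finset.le_max' g w hw
        omega
      omega
    refine ⟨hgΓ, hgne, ?_⟩
    have hdisj : Disjoint g γ := hpd hgΓ hγ hgne
    have hnlt : ¬ ltC γ g := by
      rintro ⟨u, hu, v, hv, huv, hno, hall⟩
      have hcard : cntRdual γ u = γ.card := by
        unfold cntRdual
        rw [Finset.filter_true_of_mem (fun w hw => (hall w hw).1), Finset.card_def]
      have := (hb u hu).2
      omega
    by_contra hnlt2
    have hdv := hvol g hgΓ γ hγ hgne hnlt2 hnlt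
    have hcard2 : 1 < g.card := by
      rcases hevg with ⟨n, hn⟩
      have : 0 < g.card := Finset.card_pos.mpr hneg
      omega
    have hminmax := Finset.min'_lt_max'_of_card g hcard2
    have hmax_volg : g.max' hneg ∈ vol g := (mem_vol_iff hneg).mpr ⟨hminmax, le_refl _⟩
    have hbm := hb (g.max' hneg) (Finset.max'_mem _ _)
    have h1 : g.max' hneg ≤ γ.max' hneγ := by
      obtain ⟨w, hw, hw2⟩ := cntRdual_pos_exists hbm.1
      have := Finset.le_max' γ w hw
      omega
    have h2 : γ.min' hneγ < g.max' hneg := by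
      obtain ⟨w, hw, hw2⟩ := cntRdual_lt_card_exists hbm.2
      have hwne : w ≠ g.max' hneg := by
        intro heq
        exact Finset.disjoint_right.mp hdisj hw (heq ▸ Finset.max'_mem g hneg)
      have := Finset.min'_le γ w hw
      omega
    exact Finset.disjoint_left.mp hdv hmax_volg ((mem_vol_iff hneγ).mpr ⟨h2, h1⟩)
  -- F2 : members strictly below γ are in Γm ∪ Γp
  have F2 : ∀ g ∈ Γ, g ≠ γ → ltC g γ → (g ∈ Γm Γ γ ∨ g ∈ Γp Γ γ) := by
    intro g hgΓ hgne hlt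
    obtain ⟨u, hu, v, hv, huv, hall, c, hc0, hcc, hconst⟩ := ltC_spec hlt
    have hval : ∀ k ∈ g, cntRdual γ k = c := fun k hk =>
      hconst k (le_of_lt (hall k hk).1) (hall k hk).2
    by_cases hodd : Odd c
    · left
      rw [Γm, Finset.mem_filter]
      exact ⟨hgΓ, fun k hk => by rw [hval k hk]; exact hodd⟩
    · right
      rw [Γp, Finset.mem_filter]
      exact ⟨hgΓ, fun k hk => by
        rw [hval k hk]; exact ⟨Nat.not_odd_iff_even.mp hodd, hc0, hcc⟩⟩
  -- γ itself is in neither Γm nor Γp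
  have hγnot : γ ∉ Γp Γ γ ∪ Γm Γ γ := by
    intro hmem'
    rw [Finset.mem_union] at hmem'
    rcases hmem' with h | h
    · exact (F3 γ (Or.inr h)).2.1 rfl
    · exact (F3 γ (Or.inl h)).2.1 rfl
  -- Γp and Γm are disjoint
  have hdisj_pm : Disjoint (Γp Γ γ) (Γm Γ γ) := by
    rw [Finset.disjoint_left]
    intro g hp hm
    have hgΓ := (F3 g (Or.inl hm)).1
    obtain ⟨hneg, _⟩ := hmem g hgΓ
    obtain ⟨k, hk⟩ := hneg
    rw [Γp, Finset.mem_filter] at hp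
    rw [Γm, Finset.mem_filter] at hm
    exact (Nat.not_even_iff_odd.mpr (hm.2 k hk)) (hp.2 k hk).1
  -- the decomposition of ΓOf
  have hΓOf_eq : ΓOf Γ γ = insert γ (Γp Γ γ ∪ Γm Γ γ) := by
    ext g
    rw [ΓOf, Finset.mem_filter, Finset.mem_insert, Finset.mem_union]
    constructor
    · rintro ⟨hgΓ, rfl | hlt⟩
      · exact Or.inl rfl
      · by_cases hgne : g = γ
        · exact Or.inl hgne
        · rcases F2 g hgΓ hgne hlt with h | h
          · exact Or.inr (Or.inr h)
          · exact Or.inr (Or.inl h)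
    · rintro (rfl | (h | h))
      · exact ⟨hγ, Or.inl rfl⟩
      · obtain ⟨h1, _, h3⟩ := F3 g (Or.inr h); exact ⟨h1, Or.inr h3⟩
      · obtain ⟨h1, _, h3⟩ := F3 g (Or.inl h); exact ⟨h1, Or.inr h3⟩
  -- the decomposition of Γ.erase γ
  have herase_eq : Γ.erase γ = (Γ \ ΓOf Γ γ) ∪ (Γp Γ γ ∪ Γm Γ γ) := by
    ext g
    rw [Finset.mem_erase, Finset.mem_union, Finset.mem_sdiff]
    constructor
    · rintro ⟨hgne, hgΓ⟩
      by_cases hin : g ∈ ΓOf Γ γ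
      · rw [ΓOf, Finset.mem_filter] at hin
        rcases hin.2 with rfl | hlt
        · exact absurd rfl hgne
        · rcases F2 g hgΓ hgne hlt with h | h
          · exact Or.inr (Finset.mem_union.mpr (Or.inr h))
          · exact Or.inr (Finset.mem_union.mpr (Or.inl h))
      · exact Or.inl ⟨hgΓ, hin⟩
    · rintro (⟨hgΓ, hnin⟩ | h)
      · refine ⟨?_, hgΓ⟩
        rintro rfl
        exact hnin (by rw [ΓOf, Finset.mem_filter]; exact ⟨hgΓ, Or.inl rfl⟩)
      · rcases Finset.mem_union.mp h with h | h
        · obtain ⟨h1, h2, _⟩ := F3 g (Or.inr h); exact ⟨h2, h1⟩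
        · obtain ⟨h1, h2, _⟩ := F3 g (Or.inl h); exact ⟨h2, h1⟩
  -- Γ \ ΓOf is disjoint from Γp ∪ Γm
  have hdisj_sdiff_pm : Disjoint (Γ \ ΓOf Γ γ) (Γp Γ γ ∪ Γm Γ γ) := by
    rw [Finset.disjoint_left]
    intro g hg hg2
    rw [Finset.mem_sdiff] at hg
    rw [Finset.mem_union] at hg2
    apply hg.2
    rw [hΓOf_eq, Finset.mem_insert, Finset.mem_union]
    rcases hg2 with h | h
    · exact Or.inr (Or.inl h)
    · exact Or.inr (Or.inr h)
  -- membership in NSet of subfamilies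
  have hNS : ∀ S : Finset (Finset ℤ), S ⊆ Γ → ∀ x : ℤ,
      (x ∈ NSet S ↔ Odd (∑ g ∈ S, cntR g x)) := by
    intro S hS x
    exact mem_NSet_iff (hpd.subset (Finset.coe_subset.mpr hS))
      (fun g hg => (hmem g (hS hg)).2)
  have hsubA : Γ \ ΓOf Γ γ ⊆ Γ := Finset.sdiff_subset
  have hsubO : ΓOf Γ γ ⊆ Γ := Finset.filter_subset _ _
  have hsubP : Γp Γ γ ⊆ Γ := Finset.filter_subset _ _
  have hsubM : Γm Γ γ ⊆ Γ := Finset.filter_subset _ _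
  have hsubE : Γ.erase γ ⊆ Γ := Finset.erase_subset _ _
  -- sum decompositions
  have hsum1 : ∀ x : ℤ, ∑ g ∈ Γ, cntR g x
      = ∑ g ∈ Γ \ ΓOf Γ γ, cntR g x + ∑ g ∈ ΓOf Γ γ, cntR g x :=
    fun x => (Finset.sum_sdiff hsubO).symm
  have hsum2 : ∀ x : ℤ, ∑ g ∈ ΓOf Γ γ, cntR g x
      = cntR γ x + (∑ g ∈ Γp Γ γ, cntR g x + ∑ g ∈ Γm Γ γ, cntR g x) := by
    intro x
    rw [hΓOf_eq, Finset.sum_insert hγnot, Finset.sum_union hdisj_pm]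
  have hsum3 : ∀ x : ℤ, ∑ g ∈ Γ.erase γ, cntR g x
      = ∑ g ∈ Γ \ ΓOf Γ γ, cntR g x + (∑ g ∈ Γp Γ γ, cntR g x + ∑ g ∈ Γm Γ γ, cntR g x) := by
    intro x
    rw [herase_eq, Finset.sum_union hdisj_sdiff_pm, Finset.sum_union hdisj_pm]
  -- region facts
  have regA : ∀ x : ℤ, Odd (∑ g ∈ Γ \ ΓOf Γ γ, cntR g x) →
      ¬(γ.min' hneγ < x ∧ x ≤ γ.max' hneγ) := by
    intro x h
    obtain ⟨g, hgel, hodd⟩ := odd_sum_exists h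
    rw [Finset.mem_sdiff] at hgel
    obtain ⟨hgΓ, hgnin⟩ := hgel
    have hgprop : ¬(g = γ ∨ ltC g γ) := by
      intro hcon
      exact hgnin (by rw [ΓOf, Finset.mem_filter]; exact ⟨hgΓ, hcon⟩)
    push_neg at hgprop
    have hdv := hvol g hgΓ γ hγ hgprop.1 hgprop.2 (hext g hgΓ)
    obtain ⟨hneg, hevg⟩ := hmem g hgΓ
    obtain ⟨hb1, hb2⟩ := odd_cntR_bounds hneg hevg hodd
    rintro ⟨hc1, hc2⟩
    exact Finset.disjoint_left.mp hdv ((mem_vol_iff hneg).mpr ⟨hb1, hb2⟩)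
      ((mem_vol_iff hneγ).mpr ⟨hc1, hc2⟩)
  have regM : ∀ x : ℤ, Odd (∑ g ∈ Γm Γ γ, cntR g x) → Odd (cntR γ x) := by
    intro x h
    obtain ⟨g, hgel, hodd⟩ := odd_sum_exists h
    obtain ⟨hgΓ, hgne, hlt⟩ := F3 g (Or.inl hgel)
    obtain ⟨hneg, hevg⟩ := hmem g hgΓ
    obtain ⟨u, hu, v, hv, huv, hall, c, hc0, hcc, hconst⟩ := ltC_spec hlt
    obtain ⟨hb1, hb2⟩ := odd_cntR_bounds hneg hevg hodd
    have humin := (hall (g.min' hneg) (Finset.min'_mem _ _)).1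
    have hvmax := (hall (g.max' hneg) (Finset.max'_mem _ _)).2
    have hcx : cntR γ x = c := by
      rw [cntR_eq_cntRdual]
      exact hconst (x - 1) (by omega) (by omega)
    have hcodd : Odd c := by
      rw [Γm, Finset.mem_filter] at hgel
      have := hgel.2 (g.min' hneg) (Finset.min'_mem _ _)
      rwa [hconst (g.min' hneg) (by omega) (by
        have := (hall (g.min' hneg) (Finset.min'_mem _ _)).2
        omega)] at this
    rw [hcx]
    exact hcodd
  have regP : ∀ x : ℤ, Odd (∑ g ∈ Γp Γ γ, cntR g x) →
      ¬ Odd (cntR γ x) ∧ γ.min' hneγ < x ∧ x ≤ γ.max' hneγ := by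
    intro x h
    obtain ⟨g, hgel, hodd⟩ := odd_sum_exists h
    obtain ⟨hgΓ, hgne, hlt⟩ := F3 g (Or.inr hgel)
    obtain ⟨hneg, hevg⟩ := hmem g hgΓ
    obtain ⟨u, hu, v, hv, huv, hall, c, hc0, hcc, hconst⟩ := ltC_spec hlt
    obtain ⟨hb1, hb2⟩ := odd_cntR_bounds hneg hevg hodd
    have humin := (hall (g.min' hneg) (Finset.min'_mem _ _)).1
    have hvmax := (hall (g.max' hneg) (Finset.max'_mem _ _)).2
    have hcx : cntR γ x = c := by
      rw [cntR_eq_cntRdual]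
      exact hconst (x - 1) (by omega) (by omega)
    have hceven : Even c := by
      rw [Γp, Finset.mem_filter] at hgel
      have := (hgel.2 (g.min' hneg) (Finset.min'_mem _ _)).1
      rwa [hconst (g.min' hneg) (by omega) (by
        have := (hall (g.min' hneg) (Finset.min'_mem _ _)).2
        omega)] at this
    refine ⟨by rw [hcx]; exact Nat.not_odd_iff_even.mpr hceven, ?_, ?_⟩
    · exact cntR_lt_card_bound hneγ (by rw [hcx]; omega)
    · exact cntR_pos_bound hneγ (by rw [hcx]; omega)
  have regG : ∀ x : ℤ, Odd (cntR γ x) → γ.min' hneγ < x ∧ x ≤ γ.max' hneγ :=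
    fun x h => odd_cntR_bounds hneγ hevγ h
  -- assemble
  refine ⟨⟨?_, ?_⟩, ⟨?_, ?_, ?_, ?_⟩, ⟨?_, ?_⟩⟩
  · -- NSet Γ = NSet (Γ \ ΓOf) ∪ NSet ΓOf
    ext x
    rw [Finset.mem_union, hNS Γ (le_refl _) x, hNS _ hsubA x, hNS _ hsubO x,
      hsum1 x, hsum2 x]
    have hA := regA x
    have hM := regM x
    have hP := regP x
    have hG := regG x
    simp only [Nat.odd_iff] at *
    omega
  · -- disjointness
    rw [Finset.disjoint_left]
    intro x hx hx2
    rw [hNS _ hsubA x] at hx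
    rw [hNS _ hsubO x, hsum2 x] at hx2
    have hA := regA x hx
    have hM := regM x
    have hP := regP x
    have hG := regG x
    simp only [Nat.odd_iff] at *
    omega
  · -- NSet (erase γ) = ...
    ext x
    rw [Finset.mem_union, Finset.mem_union, hNS _ hsubE x, hNS _ hsubA x, hNS _ hsubP x,
      hNS _ hsubM x, hsum3 x]
    have hA := regA x
    have hM := regM x
    have hP := regP x
    have hG := regG x
    simp only [Nat.odd_iff] at *
    omega
  · rw [Finset.disjoint_left]
    intro x hx hx2
    rw [hNS _ hsubA x] at hx
    rw [hNS _ hsubP x] at hx2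
    have hA := regA x hx
    have hP := regP x hx2
    simp only [Nat.odd_iff] at *
    omega
  · rw [Finset.disjoint_left]
    intro x hx hx2
    rw [hNS _ hsubA x] at hx
    rw [hNS _ hsubM x] at hx2
    have hA := regA x hx
    have hM := regM x hx2
    have hG := regG x
    simp only [Nat.odd_iff] at *
    omega
  · rw [Finset.disjoint_left]
    intro x hx hx2
    rw [hNS _ hsubP x] at hx
    rw [hNS _ hsubM x] at hx2
    have hP := regP x hx
    have hM := regM x hx2
    simp only [Nat.odd_iff] at *
    omega
  · -- NSet ΓOf = NSet Γp ∪ (Iminus γ \ NSet Γm)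
    ext x
    rw [Finset.mem_union, Finset.mem_sdiff, hNS _ hsubO x, hNS _ hsubP x, hNS _ hsubM x,
      mem_Iminus_iff hevγ, hsum2 x]
    have hM := regM x
    have hP := regP x
    have hG := regG x
    simp only [Nat.odd_iff] at *
    omega
  · rw [Finset.disjoint_left]
    intro x hx hx2
    rw [Finset.mem_sdiff, mem_Iminus_iff hevγ] at hx2
    rw [hNS _ hsubP x] at hx
    have hP := regP x hx
    simp only [Nat.odd_iff] at *
    omega
end
end

section
/- Let M > 1 and 1 < a < 2, let γ be a spin-flip collection, let 1 ≤ n, m ≤ n₀(γ), and let I ∈ 𝒾'ₙ(γ) and I' ∈ 𝒾'ₘ(γ) with I ≠ I'. Then the sets (I₋ × I₊) ∪ (I₊ × I₋) and (I'₋ × I'₊) ∪ (I'₊ × I'₋) are disjoint. -/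
noncomputable section
open scoped Classical

/-! An integer `k : ℤ` encodes the dual-lattice site (spin flip) `k + 1/2 ∈ ℤ + 1/2`. -/

/-- Auxiliary greedy construction of the canonical cover (with fuel). -/
def coverAux (n : ℕ) : ℕ → Finset ℤ → Finset ℤ
  | 0, _ => ∅
  | fuel + 1, γ =>
    if h : γ.Nonempty then
      insert (γ.min' h) (coverAux n fuel (γ.filter fun x => γ.min' h + 2 ^ n ≤ x))
    else ∅

/-- The left endpoints of the intervals of the canonical greedy cover `𝒾ₙ(γ)` of `γ` by
open intervals of diameter `2^n` with integer endpoints: `u` encodes `(u, u + 2^n)`. -/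
def cover (n : ℕ) (γ : Finset ℤ) : Finset ℤ := coverAux n γ.card γ

/-- `n₀(γ) = ⌊log₂ diam γ⌋`. -/
def n0 (γ : Finset ℤ) : ℕ := Nat.log 2 (diamZ γ).toNat

/-- The isolated intervals `𝒾'ₙ(γ)`: intervals of `𝒾ₙ(γ)` at distance `≥ 2M·2^{an}` from
every other interval of `𝒾ₙ(γ)` (the distance between the intervals encoded by `u ≠ u'`
being `|u − u'| − 2^n`). -/
def isoCover (M a : ℝ) (n : ℕ) (γ : Finset ℤ) : Finset ℤ :=
  (cover n γ).filter fun u => ∀ u' ∈ cover n γ, u' ≠ u →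
    2 * M * (2 : ℝ) ^ (a * n) ≤ |(u : ℝ) - (u' : ℝ)| - 2 ^ n

/-- For `I = (u, u + 2^n)`, the flank `I₋ = [u − 2^{n−1} + 1, u] ∩ ℤ`. -/
def sideL (n : ℕ) (u : ℤ) : Finset ℤ := Finset.Icc (u - 2 ^ (n - 1) + 1) u

/-- For `I = (u, v) = (u, u + 2^n)`, the flank `I₊ = [v, v + 2^{n−1} − 1] ∩ ℤ`. -/
def sideR (n : ℕ) (u : ℤ) : Finset ℤ := Finset.Icc (u + 2 ^ n) (u + 2 ^ n + 2 ^ (n - 1) - 1)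

lemma core_ne (n m : ℕ) (hn : 1 ≤ n) (hlt : n < m) (u u' x y : ℤ)
    (hx1 : u - 2 ^ (n - 1) + 1 ≤ x) (hx2 : x ≤ u')
    (hy1 : u' + 2 ^ m ≤ y) (hy2 : y ≤ u + 2 ^ n + 2 ^ (n - 1) - 1) : False := by
  have h3 : (2 : ℤ) ^ (n + 1) ≤ 2 ^ m := pow_le_pow_right₀ (by norm_num) (by omega)
  have h4 : (2 : ℤ) ^ (n + 1) = 2 ^ n * 2 := pow_succ 2 n
  have h5 : (2 : ℤ) ^ (n - 1) * 2 ≤ 2 ^ n := by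
    calc (2 : ℤ) ^ (n - 1) * 2 = 2 ^ (n - 1 + 1) := (pow_succ 2 (n - 1)).symm
    _ ≤ 2 ^ n := pow_le_pow_right₀ (by norm_num) (by omega)
  linarith

lemma core_eq (M a : ℝ) (hM : 1 < M) (n : ℕ) (u u' : ℤ)
    (hiso : 2 * M * (2 : ℝ) ^ (a * n) ≤ |(u : ℝ) - (u' : ℝ)| - 2 ^ n)
    (hd1 : u - u' ≤ 2 ^ (n - 1) - 1) (hd2 : u' - u ≤ 2 ^ (n - 1) - 1) : False := by
  have h1 : |(u : ℝ) - (u' : ℝ)| ≤ (2 : ℝ) ^ (n - 1) - 1 := by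
    rw [abs_sub_le_iff]
    constructor <;> [exact_mod_cast hd1; exact_mod_cast hd2]
  have h2 : (2 : ℝ) ^ (n - 1) ≤ 2 ^ n := pow_le_pow_right₀ (by norm_num) (Nat.sub_le n 1)
  have hM0 : (0 : ℝ) < M := lt_trans one_pos hM
  have h3 : (0 : ℝ) < 2 ^ (a * n) := Real.rpow_pos_of_pos two_pos _
  have h4 : (0 : ℝ) < 2 * M * 2 ^ (a * n) := by positivity
  linarith

lemma both_sides (M a : ℝ) (hM : 1 < M) (n m : ℕ) (hn : 1 ≤ n) (hm : 1 ≤ m)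
    (γ : Finset ℤ) (u u' : ℤ)
    (hu : u ∈ isoCover M a n γ) (hu' : u' ∈ isoCover M a m γ)
    (hne : ¬(u = u' ∧ n = m)) (x y : ℤ)
    (hxL : u - 2 ^ (n - 1) + 1 ≤ x ∧ x ≤ u)
    (hyR : u + 2 ^ n ≤ y ∧ y ≤ u + 2 ^ n + 2 ^ (n - 1) - 1)
    (hxL' : u' - 2 ^ (m - 1) + 1 ≤ x ∧ x ≤ u')
    (hyR' : u' + 2 ^ m ≤ y ∧ y ≤ u' + 2 ^ m + 2 ^ (m - 1) - 1) : False := by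
  rcases Nat.lt_trichotomy n m with h | h | h
  · exact core_ne n m hn h u u' x y hxL.1 hxL'.2 hyR'.1 hyR.2
  · subst h
    have huu' : u' ≠ u := fun he => hne ⟨he.symm, rfl⟩
    rw [isoCover, Finset.mem_filter] at hu hu'
    have hiso := hu.2 u' hu'.1 huu'
    exact core_eq M a hM n u u' hiso (by linarith [hxL.1, hxL'.2]) (by linarith [hxL'.1, hxL.2])
  · exact core_ne m n hm h u' u x y hxL'.1 hxL.2 hyR.1 hyR'.2

/-- Lemma `intervalospnc`: distinct isolated intervals have disjoint
associated pair sets `(I₋ × I₊) ∪ (I₊ × I₋)`. -/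
theorem isolated_pairs_disjoint (M a : ℝ) (hM : 1 < M) (ha1 : 1 < a) (ha2 : a < 2)
    (γ : Finset ℤ) (hne : γ.Nonempty) (heven : Even γ.card)
    (n m : ℕ) (hn1 : 1 ≤ n) (hn2 : n ≤ n0 γ) (hm1 : 1 ≤ m) (hm2 : m ≤ n0 γ)
    (u u' : ℤ) (hu : u ∈ isoCover M a n γ) (hu' : u' ∈ isoCover M a m γ)
    (hne' : ¬(u = u' ∧ n = m)) :
    Disjoint ((sideL n u ×ˢ sideR n u) ∪ (sideR n u ×ˢ sideL n u))
      ((sideL m u' ×ˢ sideR m u') ∪ (sideR m u' ×ˢ sideL m u')) := by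
  rw [Finset.disjoint_left]
  rintro ⟨x, y⟩ hp hp'
  simp only [Finset.mem_union, Finset.mem_product, sideL, sideR, Finset.mem_Icc] at hp hp'
  have pn : (0 : ℤ) < 2 ^ n := pow_pos two_pos n
  have pm : (0 : ℤ) < 2 ^ m := pow_pos two_pos m
  rcases hp with ⟨hx, hy⟩ | ⟨hx, hy⟩ <;> rcases hp' with ⟨hx', hy'⟩ | ⟨hx', hy'⟩
  · exact both_sides M a hM n m hn1 hm1 γ u u' hu hu' hne' x y hx hy hx' hy'
  · linarith [hx.2, hy.1, hx'.1, hy'.2]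
  · linarith [hx.1, hy.2, hx'.2, hy'.1]
  · exact both_sides M a hM n m hn1 hm1 γ u u' hu hu' hne' y x hy hx hy' hx'
end
end
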